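/- If two matrices O_1, O_2 ∈ ℝ^{L × ((M−1)K+1)} satisfy O_1 R̃^c = O_2 R̃^c, then O_1 = O_2. (That is, the emission matrix of the shared component factorial model is identifiable given an assignment matrix containing all possible assignment columns.) -/

import Mathlib

/-- The SC-FM combination matrix `R̃^c`: rows indexed by pairs `(k, m)` with `k ∈ [K]`,
`m ∈ [M-1]` (representing the value `m + 1 ∈ {1, …, M-1}`) together with one extra row;
columns indexed by tuples `f = (m_1, …, m_K)` with each `m_k ∈ {0, 1, …, M-1}`.
The entry at row `(k, m)` and column `f` is `1` if `m_k = m` and `0` otherwise, and the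
entry of the extra row at column `f` is the number of indices `k` with `m_k = 0`. -/
def scCombMatrix (M K : ℕ) : Matrix ((Fin K × Fin (M - 1)) ⊕ Unit) (Fin K → Fin M) ℝ :=
  fun r f =>
    match r with
    | Sum.inl (k, m) => if (f k : ℕ) = (m : ℕ) + 1 then 1 else 0
    | Sum.inr _ => ((Finset.univ.filter fun k => (f k : ℕ) = 0).card : ℝ)

/-- Identifiability of the SC-FM emission matrix: if `O₁ R̃^c = O₂ R̃^c` then `O₁ = O₂`. -/
theorem scfm_identifiable (M K L : ℕ) (hM : 1 ≤ M) (hK : 1 ≤ K) (hL : 1 ≤ L)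
    (O₁ O₂ : Matrix (Fin L) ((Fin K × Fin (M - 1)) ⊕ Unit) ℝ)
    (h : O₁ * scCombMatrix M K = O₂ * scCombMatrix M K) : O₁ = O₂ := by
  have hM0 : 0 < M := hM
  have key : ∀ (O : Matrix (Fin L) ((Fin K × Fin (M-1)) ⊕ Unit) ℝ) (l : Fin L)
      (f : Fin K → Fin M),
      (O * scCombMatrix M K) l f
        = (∑ p : Fin K × Fin (M-1),
            O l (Sum.inl p) * (if (f p.1 : ℕ) = (p.2 : ℕ) + 1 then 1 else 0))
          + O l (Sum.inr ()) * ((Finset.univ.filter fun k => (f k : ℕ) = 0).card : ℝ) := by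
    intro O l f
    rw [Matrix.mul_apply, Fintype.sum_sum_type]
    simp [scCombMatrix]
  have hzero : ∀ l, O₁ l (Sum.inr ()) = O₂ l (Sum.inr ()) := by
    intro l
    have h0 := congrFun (congrFun h l) (fun _ => (⟨0, hM0⟩ : Fin M))
    rw [key, key] at h0
    simp at h0
    rcases h0 with h0 | h0
    · exact h0
    · omega
  ext l r
  match r with
  | Sum.inr u => exact hzero l
  | Sum.inl (k₀, m) =>
    have hm : (m : ℕ) + 1 < M := by omega
    set f : Fin K → Fin M := fun k => if k = k₀ then ⟨(m : ℕ) + 1, hm⟩ else ⟨0, hM0⟩ with hf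
    have hsum : ∀ (O : Matrix (Fin L) ((Fin K × Fin (M-1)) ⊕ Unit) ℝ),
        (∑ p : Fin K × Fin (M-1),
          O l (Sum.inl p) * (if (f p.1 : ℕ) = (p.2 : ℕ) + 1 then 1 else 0))
        = O l (Sum.inl (k₀, m)) := by
      intro O
      rw [Finset.sum_eq_single (k₀, m)]
      · simp [hf]
      · rintro ⟨k, m'⟩ - hne
        by_cases hk : k = k₀
        · subst hk
          have hm' : m' ≠ m := by
            intro hmm; exact hne (by rw [hmm])
          simp only [hf, if_pos rfl]
          have : (m : ℕ) + 1 ≠ (m' : ℕ) + 1 := by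
            intro hc
            exact hm' (Fin.ext (by omega))
          simp [this]
          exact fun hc => absurd (Fin.ext hc) (Ne.symm hm')
        · simp [hf, hk]
      · simp
    have h0 := congrFun (congrFun h l) f
    rw [key, key, hsum, hsum] at h0
    have := hzero l
    nlinarith [h0, this]
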